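/- arXiv:2107.11953 — 3 statements merged into one kernel-verified Lean document; each statement's English description precedes it below -/
import Mathlib

section
/- Let ρ be a Borel probability measure on ℝ with finite first moment. Then the logarithmic energy L(ρ) = ∬ -log|s - t| dρ(s) dρ(t) (valued in ℝ ∪ {+∞}) satisfies L(ρ) ≥ -√(2 ∫|s| dρ(s)). -/
open MeasureTheory ENNReal

lemma log_le_half (w : ℝ) (hw : 0 < w) : Real.log w ≤ w / 2 := by
  have hs : 0 < Real.sqrt w := Real.sqrt_pos.mpr hw
  have h1 : Real.log (Real.sqrt w) ≤ Real.sqrt w - 1 := Real.log_le_sub_one_of_pos hs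
  have h2 : Real.log w = 2 * Real.log (Real.sqrt w) := by rw [Real.log_sqrt hw.le]; ring
  have h3 : Real.sqrt w ^ 2 = w := Real.sq_sqrt hw.le
  nlinarith [sq_nonneg (Real.sqrt w - 2)]

lemma log_le_sqrt (w : ℝ) (hw : 0 ≤ w) : Real.log w ≤ Real.sqrt w := by
  rcases eq_or_lt_of_le hw with h|h
  · simp [← h]
  · have := log_le_half (Real.sqrt w) (Real.sqrt_pos.mpr h)
    have h2 : Real.log w = 2 * Real.log (Real.sqrt w) := by rw [Real.log_sqrt hw]; ring
    linarith

/-- Extended-real-valued integral: +∞ allowed, defined when the negative part is finite. -/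
noncomputable def eInt {α : Type*} [MeasurableSpace α] (μ : Measure α) (f : α → ℝ) : EReal :=
  ((∫⁻ a, ENNReal.ofReal (f a) ∂μ : ℝ≥0∞) : EReal) -
    ((∫⁻ a, ENNReal.ofReal (-f a) ∂μ : ℝ≥0∞) : EReal)

/-- The logarithmic energy, valued in ℝ ∪ {+∞}. -/
noncomputable def logEnergy (ρ : Measure ℝ) : EReal :=
  eInt (ρ.prod ρ) (fun p => -Real.log |p.1 - p.2|)

theorem stmt_7 (ρ : Measure ℝ) [IsProbabilityMeasure ρ]
    (hmom : Integrable (fun x => |x|) ρ) :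
    ((-Real.sqrt (2 * ∫ s, |s| ∂ρ) : ℝ) : EReal) ≤ logEnergy ρ := by
  set M : ℝ := ∫ s, |s| ∂ρ with hM
  have hM0 : 0 ≤ M := integral_nonneg fun x => abs_nonneg x
  set μ := ρ.prod ρ with hμ
  haveI : IsProbabilityMeasure μ := by rw [hμ]; infer_instance
  set B : ℝ≥0∞ := ∫⁻ p, ENNReal.ofReal (-(-Real.log |p.1 - p.2|)) ∂μ with hB
  -- pointwise bound
  have hpt : ∀ p : ℝ × ℝ, ENNReal.ofReal (Real.log |p.1 - p.2|) ≤
      ENNReal.ofReal (Real.sqrt (|p.1| + |p.2|)) := by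
    intro p
    apply ENNReal.ofReal_le_ofReal
    calc Real.log |p.1 - p.2| ≤ Real.sqrt |p.1 - p.2| := log_le_sqrt _ (abs_nonneg _)
      _ ≤ Real.sqrt (|p.1| + |p.2|) := Real.sqrt_le_sqrt (abs_sub _ _)
  -- measurability
  have hFmeas : Measurable fun p : ℝ × ℝ => ENNReal.ofReal (Real.sqrt (|p.1| + |p.2|)) := by
    apply ENNReal.measurable_ofReal.comp
    exact Real.continuous_sqrt.measurable.comp
      ((measurable_fst.abs.add measurable_snd.abs))
  -- Cauchy-Schwarz step
  have hCS : (∫⁻ p, ENNReal.ofReal (Real.sqrt (|p.1| + |p.2|)) ∂μ) ≤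
      (∫⁻ p, ENNReal.ofReal (|p.1| + |p.2|) ∂μ) ^ (1/2 : ℝ) := by
    have hpq : (2:ℝ).HolderConjugate 2 := ⟨by norm_num, by norm_num, by norm_num⟩
    have := ENNReal.lintegral_mul_le_Lp_mul_Lq μ hpq hFmeas.aemeasurable
      (aemeasurable_const (b := (1:ℝ≥0∞)))
    simp only [mul_one, ENNReal.one_rpow, lintegral_const, measure_univ, one_mul] at this
    calc (∫⁻ p, ENNReal.ofReal (Real.sqrt (|p.1| + |p.2|)) ∂μ)
        ≤ (∫⁻ p, ENNReal.ofReal (Real.sqrt (|p.1| + |p.2|)) ^ (2:ℝ) ∂μ) ^ (1/(2:ℝ)) := by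
          simpa using this
      _ = (∫⁻ p, ENNReal.ofReal (|p.1| + |p.2|) ∂μ) ^ (1/2 : ℝ) := by
          congr 1
          apply lintegral_congr
          intro p
          rw [ENNReal.ofReal_rpow_of_nonneg (Real.sqrt_nonneg _) (by norm_num)]
          congr 1
          rw [Real.rpow_two, Real.sq_sqrt (by positivity)]
  -- compute the integral of |s|+|t|
  have habs : ∫⁻ p : ℝ × ℝ, ENNReal.ofReal (|p.1| + |p.2|) ∂μ = ENNReal.ofReal (2 * M) := by
    have h1 : ∀ p : ℝ × ℝ, ENNReal.ofReal (|p.1| + |p.2|) =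
        ENNReal.ofReal |p.1| + ENNReal.ofReal |p.2| := fun p =>
      ENNReal.ofReal_add (abs_nonneg _) (abs_nonneg _)
    have hInt : ∫⁻ s, ENNReal.ofReal |s| ∂ρ = ENNReal.ofReal M := by
      rw [hM, ← ofReal_integral_eq_lintegral_ofReal hmom (ae_of_all _ fun x => abs_nonneg x)]
    rw [lintegral_congr h1]
    rw [lintegral_add_left (measurable_fst.abs.ennreal_ofReal), hμ]
    rw [lintegral_prod _ (measurable_fst.abs.ennreal_ofReal).aemeasurable]
    rw [lintegral_prod _ (measurable_snd.abs.ennreal_ofReal).aemeasurable]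
    simp only [lintegral_const, measure_univ, mul_one, hInt]
    rw [← ENNReal.ofReal_add hM0 hM0]
    congr 1; ring
  have hBle : B ≤ ENNReal.ofReal (Real.sqrt (2 * M)) := by
    calc B ≤ ∫⁻ p, ENNReal.ofReal (Real.sqrt (|p.1| + |p.2|)) ∂μ := by
          rw [hB]; exact lintegral_mono fun p => by rw [neg_neg]; exact hpt p
      _ ≤ (ENNReal.ofReal (2 * M)) ^ (1/2 : ℝ) := by rw [← habs]; exact hCS
      _ = ENNReal.ofReal (Real.sqrt (2 * M)) := by
          rw [ENNReal.ofReal_rpow_of_nonneg (by positivity) (by norm_num),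
            Real.sqrt_eq_rpow]
  -- EReal part
  have hfin : B ≠ ⊤ := ne_top_of_le_ne_top ENNReal.ofReal_ne_top hBle
  rw [logEnergy, eInt, ← hμ, ← hB]
  calc ((-Real.sqrt (2 * M) : ℝ) : EReal)
      = (0 : EReal) - ((ENNReal.ofReal (Real.sqrt (2*M)) : ℝ≥0∞) : EReal) := by
        rw [EReal.coe_ennreal_ofReal, max_eq_left (Real.sqrt_nonneg _)]
        rw [zero_sub, ← EReal.coe_neg]
    _ ≤ ((∫⁻ p, ENNReal.ofReal (-Real.log |p.1 - p.2|) ∂μ : ℝ≥0∞) : EReal) - (B : EReal) := by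
        apply EReal.sub_le_sub
        · exact EReal.coe_ennreal_nonneg _
        · exact EReal.coe_ennreal_le_coe_ennreal_iff.mpr hBle
end

section
/- Let σ be the standard semicircle measure on ℝ, with density (1/(2π))√(4 - x²) on [-2, 2]. Then for every polynomial p with real coefficients, ∬ (p(s) - p(t))/(s - t) dσ(s) dσ(t) = ∫ s·p(s) dσ(s), where the integrand on the left is interpreted as the divided difference of p (equal to p'(s) when s = t). -/
open MeasureTheory Polynomial

/-- The standard semicircle measure, with density (1/(2π))√(4-x²) on [-2,2]. -/
noncomputable def semicircle : Measure ℝ :=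
  (volume.restrict (Set.Icc (-2 : ℝ) 2)).withDensity
    (fun x => ENNReal.ofReal (1 / (2 * Real.pi) * Real.sqrt (4 - x ^ 2)))

/-- The divided difference of a polynomial, equal to p' on the diagonal. -/
noncomputable def dividedDiff (p : Polynomial ℝ) (s t : ℝ) : ℝ :=
  if s = t then (Polynomial.derivative p).eval s else (p.eval s - p.eval t) / (s - t)

open Real
open scoped ENNReal NNReal

noncomputable def scDens (x : ℝ) : ℝ := 1 / (2 * Real.pi) * Real.sqrt (4 - x ^ 2)

lemma scDens_nonneg (x : ℝ) : 0 ≤ scDens x := by unfold scDens; positivity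

lemma scDens_cont : Continuous scDens := by
  unfold scDens; fun_prop

lemma scDens_meas : Measurable fun x => ENNReal.ofReal (scDens x) :=
  ENNReal.measurable_ofReal.comp scDens_cont.measurable

lemma semicircle_eq : semicircle =
    (volume.restrict (Set.Icc (-2 : ℝ) 2)).withDensity
      (fun x => ((scDens x).toNNReal : ℝ≥0∞)) := rfl

lemma integral_semicircle (f : ℝ → ℝ) :
    ∫ x, f x ∂semicircle = ∫ x in Set.Icc (-2:ℝ) 2, scDens x * f x := by
  rw [semicircle_eq, integral_withDensity_eq_integral_smul
    (show Measurable fun x => (scDens x).toNNReal from measurable_real_toNNReal.comp scDens_cont.measurable)]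
  congr 1 with x
  simp [NNReal.smul_def, Real.coe_toNNReal _ (scDens_nonneg x)]

instance : IsFiniteMeasure semicircle := by
  constructor
  rw [semicircle, withDensity_apply _ MeasurableSet.univ,
    Measure.restrict_restrict MeasurableSet.univ]
  simp only [Set.univ_inter]
  calc ∫⁻ x in Set.Icc (-2:ℝ) 2, ENNReal.ofReal (1 / (2 * Real.pi) * Real.sqrt (4 - x ^ 2)) ∂volume
      ≤ ∫⁻ _ in Set.Icc (-2:ℝ) 2, ENNReal.ofReal (1 / Real.pi) ∂volume := by
        apply lintegral_mono
        intro x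
        apply ENNReal.ofReal_le_ofReal
        have h1 : Real.sqrt (4 - x ^ 2) ≤ 2 := by
          rw [show (2:ℝ) = Real.sqrt 4 by
            rw [show (4:ℝ) = 2^2 by norm_num, Real.sqrt_sq]; norm_num]
          exact Real.sqrt_le_sqrt (by nlinarith [sq_nonneg x])
        rw [div_mul_eq_mul_div, one_mul, div_le_div_iff₀ (by positivity) Real.pi_pos]
        nlinarith [Real.pi_pos]
    _ < ⊤ := by
        rw [lintegral_const, Measure.restrict_apply MeasurableSet.univ]
        simp only [Set.univ_inter, Real.volume_Icc]
        exact ENNReal.mul_lt_top ENNReal.ofReal_lt_top ENNReal.ofReal_lt_top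

lemma integrable_semicircle {f : ℝ → ℝ} (hf : Continuous f) : Integrable f semicircle := by
  have : semicircle = (volume.restrict (Set.Icc (-2 : ℝ) 2)).withDensity
      (fun x => ENNReal.ofReal (scDens x)) := rfl
  rw [this, integrable_withDensity_iff scDens_meas
    (Filter.Eventually.of_forall (fun x => ENNReal.ofReal_lt_top))]
  have hc : Continuous fun x => f x * (ENNReal.ofReal (scDens x)).toReal := by
    have : (fun x => f x * (ENNReal.ofReal (scDens x)).toReal)
        = fun x => f x * scDens x := by
      ext x; rw [ENNReal.toReal_ofReal (scDens_nonneg x)]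
    rw [this]; exact hf.mul scDens_cont
  exact hc.continuousOn.integrableOn_compact isCompact_Icc

noncomputable def J (n : ℕ) : ℝ := ∫ x in (-2:ℝ)..2, x ^ n * Real.sqrt (4 - x ^ 2)

lemma moment_eq (n : ℕ) : ∫ x, x ^ n ∂semicircle = 1 / (2 * Real.pi) * J n := by
  rw [integral_semicircle, integral_Icc_eq_integral_Ioc,
    ← intervalIntegral.integral_of_le (by norm_num : (-2:ℝ) ≤ 2), J,
    ← intervalIntegral.integral_const_mul]
  congr 1 with x
  unfold scDens; ring

lemma J_zero : J 0 = 2 * Real.pi := by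
  have h4 : Real.sqrt 4 = 2 := by
    rw [show (4:ℝ) = 2^2 by norm_num, Real.sqrt_sq (by norm_num : (0:ℝ) ≤ 2)]
  have h : ∀ x : ℝ, Real.sqrt (4 - x ^ 2) = 2 * Real.sqrt (1 - (x / 2) ^ 2) := by
    intro x
    rw [show (4:ℝ) - x ^ 2 = 4 * (1 - (x / 2) ^ 2) by ring,
      Real.sqrt_mul (by norm_num : (0:ℝ) ≤ 4), h4]
  unfold J
  simp only [pow_zero, one_mul]
  rw [intervalIntegral.integral_congr (fun x _ => h x),
    intervalIntegral.integral_const_mul, intervalIntegral.integral_comp_div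
      (fun u => Real.sqrt (1 - u ^ 2)) (by norm_num : (2:ℝ) ≠ 0)]
  norm_num [integral_sqrt_one_sub_sq]
  ring

lemma J_odd (k : ℕ) : J (2 * k + 1) = 0 := by
  unfold J
  have h := intervalIntegral.integral_comp_neg
    (a := (-2:ℝ)) (b := 2) (fun x => x ^ (2 * k + 1) * Real.sqrt (4 - x ^ 2))
  simp only [neg_neg] at h
  have h2 : (∫ x in (-2:ℝ)..2, (-x) ^ (2 * k + 1) * Real.sqrt (4 - (-x) ^ 2))
      = ∫ x in (-2:ℝ)..2, -(x ^ (2 * k + 1) * Real.sqrt (4 - x ^ 2)) := by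
    congr 1 with x
    rw [Odd.neg_pow ⟨k, by ring⟩, neg_pow, neg_one_sq]
    ring_nf
  rw [h2, intervalIntegral.integral_neg] at h
  linarith

lemma J_rec (n : ℕ) : (n + 4 : ℝ) * J (n + 2) = 4 * (n + 1) * J n := by
  set F : ℝ → ℝ := fun x => x ^ (n + 1) * ((4 - x ^ 2) * Real.sqrt (4 - x ^ 2)) with hF
  set g : ℝ → ℝ := fun x =>
    4 * (n + 1) * (x ^ n * Real.sqrt (4 - x ^ 2))
      - (n + 4) * (x ^ (n + 2) * Real.sqrt (4 - x ^ 2)) with hg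
  have hgc : Continuous g := by fun_prop
  have hFc : Continuous F := by fun_prop
  have hderiv : ∀ x ∈ Set.Ioo (-2:ℝ) 2, HasDerivAt F (g x) x := by
    intro x hx
    have hpos : 0 < 4 - x ^ 2 := by nlinarith [hx.1, hx.2]
    set s := Real.sqrt (4 - x ^ 2) with hs
    have hs2 : s ^ 2 = 4 - x ^ 2 := Real.sq_sqrt hpos.le
    have hs0 : s ≠ 0 := by positivity
    have hsq : HasDerivAt (fun x : ℝ => 4 - x ^ 2) (-(2 * x)) x := by
      simpa using ((hasDerivAt_pow 2 x).const_sub 4)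
    have hsqrt : HasDerivAt (fun x : ℝ => Real.sqrt (4 - x ^ 2))
        (1 / (2 * s) * -(2 * x)) x :=
      (Real.hasDerivAt_sqrt hpos.ne').comp x hsq
    have hpow : HasDerivAt (fun x : ℝ => x ^ (n + 1)) ((n + 1) * x ^ n) x := by
      simpa using hasDerivAt_pow (n + 1) x
    have hprod := hpow.mul (hsq.mul hsqrt)
    convert hprod using 1
    · rfl
    · rfl
    · rfl
    rw [hg]
    simp only [Pi.mul_apply]
    rw [← hs, ← hs2]
    field_simp
    rw [hs2]
    ring
  have hftc := intervalIntegral.integral_eq_sub_of_hasDeriv_right_of_le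
    (by norm_num : (-2:ℝ) ≤ 2) hFc.continuousOn
    (fun x hx => (hderiv x hx).hasDerivWithinAt)
    (hgc.intervalIntegrable _ _)
  have hF2 : F 2 - F (-2) = 0 := by
    have : Real.sqrt (4 - (2:ℝ) ^ 2) = 0 := by norm_num
    have h2 : Real.sqrt (4 - (-2:ℝ) ^ 2) = 0 := by norm_num
    simp [hF, this, h2]
  rw [hF2] at hftc
  have hint1 : IntervalIntegrable (fun x : ℝ => x ^ n * Real.sqrt (4 - x ^ 2))
      volume (-2) 2 := by apply Continuous.intervalIntegrable; fun_prop
  have hint2 : IntervalIntegrable (fun x : ℝ => x ^ (n+2) * Real.sqrt (4 - x ^ 2))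
      volume (-2) 2 := by apply Continuous.intervalIntegrable; fun_prop
  rw [hg] at hftc
  rw [intervalIntegral.integral_sub ((hint1.const_mul _)) ((hint2.const_mul _)),
    intervalIntegral.integral_const_mul, intervalIntegral.integral_const_mul] at hftc
  unfold J
  linarith

noncomputable def M (n : ℕ) : ℝ := ∫ x, x ^ n ∂semicircle

lemma M_zero : M 0 = 1 := by
  rw [M, moment_eq, J_zero]
  field_simp

lemma M_odd (k : ℕ) : M (2 * k + 1) = 0 := by
  rw [M, moment_eq, J_odd]; ring

lemma M_rec (n : ℕ) : (n + 4 : ℝ) * M (n + 2) = 4 * (n + 1) * M n := by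
  rw [M, M, moment_eq, moment_eq]
  have := J_rec n
  field_simp
  linarith [J_rec n]

lemma catalan_rec (k : ℕ) :
    ((k : ℝ) + 2) * (catalan (k + 1) : ℝ) = 2 * (2 * k + 1) * catalan k := by
  have h1 : (k + 1 + 1) * catalan (k + 1) = Nat.centralBinom (k + 1) :=
    succ_mul_catalan_eq_centralBinom (k + 1)
  have h2 : (k + 1) * Nat.centralBinom (k + 1) = 2 * (2 * k + 1) * Nat.centralBinom k :=
    Nat.succ_mul_centralBinom_succ k
  have h3 : (k + 1) * catalan k = Nat.centralBinom k :=
    succ_mul_catalan_eq_centralBinom k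
  have key : (k + 1) * ((k + 2) * catalan (k + 1))
      = (k + 1) * (2 * (2 * k + 1) * catalan k) := by
    calc (k + 1) * ((k + 2) * catalan (k + 1))
        = (k + 1) * Nat.centralBinom (k + 1) := by rw [← h1]
      _ = 2 * (2 * k + 1) * ((k + 1) * catalan k) := by rw [h2, ← h3]
      _ = (k + 1) * (2 * (2 * k + 1) * catalan k) := by ring
  have := Nat.eq_of_mul_eq_mul_left (Nat.succ_pos k) key
  exact_mod_cast congrArg (Nat.cast : ℕ → ℝ) this

lemma M_even (k : ℕ) : M (2 * k) = catalan k := by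
  induction k with
  | zero => simpa [catalan_zero] using M_zero
  | succ k ih =>
    have hrec := M_rec (2 * k)
    have hcat := catalan_rec k
    have h1 : (2 * k + 2) = 2 * (k + 1) := by ring
    rw [h1] at hrec
    push_cast at hrec
    rw [ih] at hrec
    have h2 : ((2 * k : ℝ) + 4) ≠ 0 := by positivity
    have : ((2 * k : ℝ) + 4) * M (2 * (k + 1)) = ((2 * k : ℝ) + 4) * catalan (k + 1) := by
      rw [hrec]
      linear_combination (-2) * hcat
    exact mul_left_cancel₀ h2 this

lemma M_odd' {m : ℕ} (hm : Odd m) : M m = 0 := by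
  obtain ⟨k, hk⟩ := hm
  rw [hk, show 2 * k + 1 = 2 * k + 1 from rfl] at *
  exact M_odd k

lemma M_conv (n : ℕ) :
    ∑ i ∈ Finset.range n, M i * M (n - 1 - i) = M (n + 1) := by
  rcases Nat.even_or_odd n with ⟨k, hk⟩ | ⟨k, hk⟩
  · -- n = 2k even : RHS = M(2k+1) = 0, each LHS term zero
    subst hk
    rw [show k + k + 1 = 2 * k + 1 by ring, M_odd k]
    apply Finset.sum_eq_zero
    intro i hi
    simp only [Finset.mem_range] at hi
    rcases Nat.even_or_odd i with hie | hio
    · have hi' : i < 2 * k := by omega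
      have : Odd (k + k - 1 - i) := by
        obtain ⟨j, hj⟩ := hie
        refine ⟨k - 1 - j, by omega⟩
      rw [M_odd' this, mul_zero]
    · rw [M_odd' hio, zero_mul]
  · -- n = 2k+1 : sum over even indices
    subst hk
    have key : ∑ i ∈ Finset.range (2 * k + 1), M i * M (2 * k + 1 - 1 - i)
        = ∑ j ∈ Finset.range (k + 1), (catalan j : ℝ) * catalan (k - j) := by
      rw [← Finset.sum_filter_add_sum_filter_not (Finset.range (2 * k + 1)) (fun i => Even i)]
      have hodd : ∑ i ∈ (Finset.range (2 * k + 1)).filter (fun i => ¬ Even i),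
          M i * M (2 * k + 1 - 1 - i) = 0 := by
        apply Finset.sum_eq_zero
        intro i hi
        simp only [Finset.mem_filter, Nat.not_even_iff_odd] at hi
        rw [M_odd' hi.2, zero_mul]
      rw [hodd, add_zero]
      apply Finset.sum_nbij' (fun i => i / 2) (fun j => 2 * j)
      · intro a ha
        simp only [Finset.mem_filter, Finset.mem_range] at ha ⊢
        omega
      · intro a ha
        simp only [Finset.mem_filter, Finset.mem_range] at ha ⊢
        constructor
        · omega
        · exact ⟨a, by ring⟩
      · intro a ha
        simp only [Finset.mem_filter, Finset.mem_range] at ha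
        obtain ⟨j, hj⟩ := ha.2
        omega
      · intro a _; omega
      · intro a ha
        simp only [Finset.mem_filter, Finset.mem_range] at ha
        obtain ⟨j, hj⟩ := ha.2
        have h1 : a = 2 * j := by omega
        have h2 : a / 2 = j := by omega
        rw [h1, Nat.mul_div_cancel_left j (by norm_num : 0 < 2),
          show 2 * k + 1 - 1 - 2 * j = 2 * (k - j) by omega, M_even, M_even]
    rw [key, show 2 * k + 1 + 1 = 2 * (k + 1) by ring, M_even]
    rw [catalan_succ']
    rw [Finset.Nat.sum_antidiagonal_eq_sum_range_succ (fun x y => catalan x * catalan y) k]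
    push_cast
    rfl

lemma dividedDiff_eq (p : Polynomial ℝ) (s t : ℝ) :
    dividedDiff p s t = ∑ n ∈ Finset.range (p.natDegree + 1),
      p.coeff n * ∑ i ∈ Finset.range n, s ^ i * t ^ (n - 1 - i) := by
  unfold dividedDiff
  split_ifs with h
  · subst h
    conv_lhs => rw [p.as_sum_range]
    rw [map_sum, Polynomial.eval_finset_sum]
    apply Finset.sum_congr rfl
    intro n _
    rw [Polynomial.derivative_monomial, Polynomial.eval_monomial]
    have : ∀ i ∈ Finset.range n, s ^ i * s ^ (n - 1 - i) = s ^ (n - 1) := by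
      intro i hi
      simp only [Finset.mem_range] at hi
      rw [← pow_add]
      congr 1
      omega
    rw [Finset.sum_congr rfl this, Finset.sum_const, Finset.card_range, nsmul_eq_mul]
    ring
  · rw [div_eq_iff (sub_ne_zero.2 h), Finset.sum_mul]
    rw [Polynomial.eval_eq_sum_range, Polynomial.eval_eq_sum_range, ← Finset.sum_sub_distrib]
    apply Finset.sum_congr rfl
    intro n _
    rw [← mul_sub, mul_assoc, geom_sum₂_mul]

lemma integrable_prod_pow (i j : ℕ) :
    Integrable (fun q : ℝ × ℝ => q.1 ^ i * q.2 ^ j) (semicircle.prod semicircle) :=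
  (integrable_semicircle (continuous_pow i)).mul_prod
    (integrable_semicircle (continuous_pow j))

theorem stmt_15 (p : Polynomial ℝ) :
    ∫ q : ℝ × ℝ, dividedDiff p q.1 q.2 ∂(semicircle.prod semicircle) =
      ∫ s, s * p.eval s ∂semicircle := by
  have hL : ∫ q : ℝ × ℝ, dividedDiff p q.1 q.2 ∂(semicircle.prod semicircle)
      = ∑ n ∈ Finset.range (p.natDegree + 1), p.coeff n * M (n + 1) := by
    simp_rw [dividedDiff_eq]
    rw [integral_finset_sum]
    · apply Finset.sum_congr rfl
      intro n _
      rw [MeasureTheory.integral_const_mul, integral_finset_sum _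
        (fun i _ => integrable_prod_pow i (n - 1 - i))]
      rw [← M_conv n]
      congr 1
      exact Finset.sum_congr rfl fun i _ => integral_prod_mul _ _
    · intro n _
      exact (integrable_finset_sum _
        (fun i _ => integrable_prod_pow i (n - 1 - i))).const_mul _
  have hR : ∫ s, s * p.eval s ∂semicircle
      = ∑ n ∈ Finset.range (p.natDegree + 1), p.coeff n * M (n + 1) := by
    have : ∀ s : ℝ, s * p.eval s
        = ∑ n ∈ Finset.range (p.natDegree + 1), p.coeff n * s ^ (n + 1) := by
      intro s
      rw [Polynomial.eval_eq_sum_range, Finset.mul_sum]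
      exact Finset.sum_congr rfl fun n _ => by ring
    simp_rw [this]
    rw [integral_finset_sum _
      (fun n _ => (integrable_semicircle (continuous_pow (n + 1))).const_mul _)]
    exact Finset.sum_congr rfl fun n _ => by rw [MeasureTheory.integral_const_mul]; rfl
  rw [hL, hR]
end

section
/- The function ρ(x) = (1/π)·log|(1 + √(1 - x²))/x| on (-1, 1) \ {0} (extended by 0 elsewhere) is a probability density: it is nonnegative on (-1,1) and ∫_{-1}^{1} ρ(x) dx = 1. -/
open MeasureTheory

/-- Density of the free Gibbs measure for the potential |x|/2. -/
noncomputable def gibbsAbsDensity (x : ℝ) : ℝ :=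
  if x ∈ Set.Ioo (-1 : ℝ) 1 ∧ x ≠ 0 then
    (1 / Real.pi) * Real.log |(1 + Real.sqrt (1 - x ^ 2)) / x|
  else 0

lemma gibbsAbsDensity_neg (x : ℝ) : gibbsAbsDensity (-x) = gibbsAbsDensity x := by
  unfold gibbsAbsDensity
  by_cases h : x ∈ Set.Ioo (-1 : ℝ) 1 ∧ x ≠ 0
  · obtain ⟨⟨h1, h2⟩, h3⟩ := h
    rw [if_pos, if_pos ⟨⟨h1, h2⟩, h3⟩]
    · rw [neg_sq, div_neg, abs_neg]
    · exact ⟨⟨by linarith, by linarith⟩, neg_ne_zero.mpr h3⟩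
  · rw [if_neg h, if_neg]
    intro ⟨⟨h1, h2⟩, h3⟩
    exact h ⟨⟨by linarith, by linarith⟩, fun hx => h3 (by simp [hx])⟩

lemma intervalIntegrable_log01 : IntervalIntegrable Real.log volume 0 1 := by
  have hmaj : IntervalIntegrable (fun x : ℝ => 2 * x ^ (-(1/2) : ℝ)) volume 0 1 :=
    (intervalIntegral.intervalIntegrable_rpow' (by norm_num)).const_mul 2
  rw [intervalIntegrable_iff_integrableOn_Ioc_of_le zero_le_one] at hmaj ⊢
  refine hmaj.integrable.mono Real.measurable_log.aestronglyMeasurable ?_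
  filter_upwards [ae_restrict_mem measurableSet_Ioc] with x hx
  have hx0 : 0 < x := hx.1
  have hx1 : x ≤ 1 := hx.2
  have hs : 0 < Real.sqrt x := Real.sqrt_pos.mpr hx0
  have hlogle : Real.log x ≤ 0 := Real.log_nonpos hx0.le hx1
  have h1 : -Real.log x = 2 * Real.log (Real.sqrt x)⁻¹ := by
    rw [Real.log_inv, Real.log_sqrt hx0.le]; ring
  have h2 : Real.log (Real.sqrt x)⁻¹ ≤ (Real.sqrt x)⁻¹ - 1 :=
    Real.log_le_sub_one_of_pos (inv_pos.mpr hs)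
  have h3 : x ^ (-(1/2) : ℝ) = (Real.sqrt x)⁻¹ := by
    rw [Real.rpow_neg hx0.le, Real.sqrt_eq_rpow]
  rw [Real.norm_eq_abs, Real.norm_eq_abs, abs_of_nonpos hlogle]
  have h4 : (0:ℝ) ≤ 2 * x ^ (-(1/2) : ℝ) := by positivity
  rw [abs_of_nonneg h4, h3]
  nlinarith [inv_pos.mpr hs]

/-- Key FTC computation. -/
lemma key_integral :
    ∫ x in (0:ℝ)..1,
      (Real.log (1 + Real.sqrt (1 - x ^ 2)) - Real.log x) = Real.pi / 2 := by
  set F : ℝ → ℝ := fun x =>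
    x * Real.log (1 + Real.sqrt (1 - x ^ 2)) - x * Real.log x + Real.arcsin x with hF
  have hcont : ContinuousOn F (Set.Icc 0 1) := by
    apply ContinuousOn.add
    apply ContinuousOn.sub
    · apply ContinuousOn.mul continuousOn_id
      apply ContinuousOn.comp Real.continuousOn_log
      · exact (continuous_const.add ((continuous_const.sub (continuous_pow 2)).sqrt)).continuousOn
      · intro x _
        have := Real.sqrt_nonneg (1 - x ^ 2)
        simp only [Set.mem_compl_iff, Set.mem_singleton_iff]
        positivity
    · exact Real.continuous_mul_log.continuousOn
    · exact Real.continuous_arcsin.continuousOn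
  have hderiv : ∀ x ∈ Set.Ioo (0:ℝ) 1, HasDerivAt F
      (Real.log (1 + Real.sqrt (1 - x ^ 2)) - Real.log x) x := by
    intro x hx
    obtain ⟨hx0, hx1⟩ := hx
    set s := Real.sqrt (1 - x ^ 2) with hs
    have hx2 : 0 < 1 - x ^ 2 := by nlinarith
    have hspos : 0 < s := Real.sqrt_pos.mpr hx2
    have hssq : s ^ 2 = 1 - x ^ 2 := Real.sq_sqrt hx2.le
    have h1s : (0:ℝ) < 1 + s := by linarith
    have hd1 : HasDerivAt (fun y : ℝ => 1 - y ^ 2) (-(2 * x)) x := by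
      simpa using ((hasDerivAt_pow 2 x).const_sub 1)
    have hd2 : HasDerivAt (fun y : ℝ => Real.sqrt (1 - y ^ 2)) (-x / s) x := by
      have := (Real.hasDerivAt_sqrt hx2.ne').comp x hd1
      refine this.congr_deriv ?_
      field_simp
      ring
    have hd3 : HasDerivAt (fun y : ℝ => Real.log (1 + Real.sqrt (1 - y ^ 2)))
        ((-x / s) / (1 + s)) x := by
      have := (Real.hasDerivAt_log h1s.ne').comp x ((hasDerivAt_const x (1:ℝ)).add hd2)
      refine this.congr_deriv ?_
      rw [zero_add]
      ring
    have hd4 : HasDerivAt (fun y : ℝ => y * Real.log (1 + Real.sqrt (1 - y ^ 2)))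
        (Real.log (1 + s) + x * ((-x / s) / (1 + s))) x := by
      have := (hasDerivAt_id x).mul hd3
      refine this.congr_deriv ?_
      simp only [id_eq, one_mul]
      rfl
    have hd5 : HasDerivAt (fun y : ℝ => y * Real.log y) (Real.log x + 1) x :=
      Real.hasDerivAt_mul_log hx0.ne'
    have hd6 : HasDerivAt Real.arcsin (1 / s) x := by
      have := Real.hasDerivAt_arcsin (by linarith) hx1.ne
      rwa [← hs] at this
    have := ((hd4.sub hd5).add hd6)
    refine this.congr_deriv ?_
    have : Real.log (1 + s) + x * ((-x / s) / (1 + s)) - (Real.log x + 1) + 1 / s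
        = Real.log (1 + s) - Real.log x
          + (x * ((-x / s) / (1 + s)) - 1 + 1 / s) := by ring
    rw [this]
    have hz : x * ((-x / s) / (1 + s)) - 1 + 1 / s = 0 := by
      field_simp
      nlinarith
    rw [hz, add_zero]
  have hint : IntervalIntegrable
      (fun x => Real.log (1 + Real.sqrt (1 - x ^ 2)) - Real.log x) volume 0 1 := by
    apply IntervalIntegrable.sub _ intervalIntegrable_log01
    apply Continuous.intervalIntegrable
    rw [continuous_iff_continuousAt]
    intro x
    have h1 : (0:ℝ) < 1 + Real.sqrt (1 - x ^ 2) := by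
      have := Real.sqrt_nonneg (1 - x ^ 2); linarith
    exact ContinuousAt.log
      ((continuous_const.add ((continuous_const.sub (continuous_pow 2)).sqrt)).continuousAt)
      h1.ne'
  have := intervalIntegral.integral_eq_sub_of_hasDerivAt_of_le zero_le_one hcont hderiv hint
  rw [this, hF]
  norm_num [Real.arcsin_one]

lemma gibbs_eq_on_Ioo01 : ∀ x ∈ Set.Ioo (0:ℝ) 1,
    gibbsAbsDensity x =
      (1 / Real.pi) * (Real.log (1 + Real.sqrt (1 - x ^ 2)) - Real.log x) := by
  intro x hx
  obtain ⟨hx0, hx1⟩ := hx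
  have hs : 0 ≤ Real.sqrt (1 - x ^ 2) := Real.sqrt_nonneg _
  have h1s : (0:ℝ) < 1 + Real.sqrt (1 - x ^ 2) := by linarith
  unfold gibbsAbsDensity
  rw [if_pos ⟨⟨by linarith, hx1⟩, hx0.ne'⟩]
  rw [abs_of_pos (div_pos h1s hx0), Real.log_div h1s.ne' hx0.ne']

lemma half_integral :
    ∫ x in Set.Ioo (0:ℝ) 1, gibbsAbsDensity x = 1 / 2 := by
  have heq : ∫ x in Set.Ioo (0:ℝ) 1, gibbsAbsDensity x
      = ∫ x in Set.Ioo (0:ℝ) 1,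
          (1 / Real.pi) * (Real.log (1 + Real.sqrt (1 - x ^ 2)) - Real.log x) :=
    setIntegral_congr_fun measurableSet_Ioo (fun x hx => gibbs_eq_on_Ioo01 x hx)
  rw [heq, ← MeasureTheory.integral_Ioc_eq_integral_Ioo,
    ← intervalIntegral.integral_of_le zero_le_one,
    intervalIntegral.integral_const_mul, key_integral]
  have hπ : Real.pi ≠ 0 := Real.pi_ne_zero
  field_simp

lemma gibbs_intervalIntegrable01 : IntervalIntegrable gibbsAbsDensity volume 0 1 := by
  rw [intervalIntegrable_iff_integrableOn_Ioc_of_le zero_le_one,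
    integrableOn_Ioc_iff_integrableOn_Ioo]
  have hg : IntegrableOn
      (fun x => (1 / Real.pi) * (Real.log (1 + Real.sqrt (1 - x ^ 2)) - Real.log x))
      (Set.Ioo (0:ℝ) 1) := by
    have hint : IntervalIntegrable
        (fun x => (1 / Real.pi) * (Real.log (1 + Real.sqrt (1 - x ^ 2)) - Real.log x))
        volume 0 1 := by
      apply IntervalIntegrable.const_mul
      apply IntervalIntegrable.sub _ intervalIntegrable_log01
      apply Continuous.intervalIntegrable
      rw [continuous_iff_continuousAt]
      intro x
      have h1 : (0:ℝ) < 1 + Real.sqrt (1 - x ^ 2) := by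
        have := Real.sqrt_nonneg (1 - x ^ 2); linarith
      exact ContinuousAt.log
        ((continuous_const.add ((continuous_const.sub (continuous_pow 2)).sqrt)).continuousAt)
        h1.ne'
    rw [intervalIntegrable_iff_integrableOn_Ioc_of_le zero_le_one,
      integrableOn_Ioc_iff_integrableOn_Ioo] at hint
    exact hint
  exact hg.congr_fun (fun x hx => (gibbs_eq_on_Ioo01 x hx).symm) measurableSet_Ioo

theorem stmt_16 :
    (∀ x ∈ Set.Ioo (-1 : ℝ) 1, 0 ≤ gibbsAbsDensity x) ∧
      ∫ x in Set.Ioo (-1 : ℝ) 1, gibbsAbsDensity x = 1 := by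
  constructor
  · intro x hx
    unfold gibbsAbsDensity
    split_ifs with h
    · obtain ⟨⟨h1, h2⟩, h3⟩ := h
      have hs : 0 ≤ Real.sqrt (1 - x ^ 2) := Real.sqrt_nonneg _
      have hxabs : 0 < |x| := abs_pos.mpr h3
      have hxlt : |x| < 1 := abs_lt.mpr ⟨h1, h2⟩
      apply mul_nonneg (by positivity)
      apply Real.log_nonneg
      rw [abs_div]
      rw [le_div_iff₀ hxabs, one_mul]
      have : |1 + Real.sqrt (1 - x ^ 2)| = 1 + Real.sqrt (1 - x ^ 2) := by
        rw [abs_of_nonneg]; linarith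
      rw [this]; linarith
    · exact le_rfl
  · have hInt01 := gibbs_intervalIntegrable01
    have heven : (fun x => gibbsAbsDensity (-x)) = gibbsAbsDensity := funext gibbsAbsDensity_neg
    have hIntNeg : IntervalIntegrable gibbsAbsDensity volume (-1) 0 := by
      have := (IntervalIntegrable.iff_comp_neg (f := gibbsAbsDensity)).mp hInt01
      rw [heven] at this
      simpa using this.symm
    have hsplit : ∫ x in (-1:ℝ)..1, gibbsAbsDensity x
        = (∫ x in (-1:ℝ)..0, gibbsAbsDensity x) + ∫ x in (0:ℝ)..1, gibbsAbsDensity x :=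
      (intervalIntegral.integral_add_adjacent_intervals hIntNeg hInt01).symm
    have hneg : ∫ x in (-1:ℝ)..0, gibbsAbsDensity x = ∫ x in (0:ℝ)..1, gibbsAbsDensity x := by
      have := intervalIntegral.integral_comp_neg (a := (0:ℝ)) (b := 1) (f := gibbsAbsDensity)
      rw [heven] at this
      simpa using this.symm
    have h01 : ∫ x in (0:ℝ)..1, gibbsAbsDensity x = 1/2 := by
      rw [intervalIntegral.integral_of_le zero_le_one,
        MeasureTheory.integral_Ioc_eq_integral_Ioo]
      exact half_integral
    calc ∫ x in Set.Ioo (-1:ℝ) 1, gibbsAbsDensity x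
        = ∫ x in (-1:ℝ)..1, gibbsAbsDensity x := by
          rw [intervalIntegral.integral_of_le (by norm_num : (-1:ℝ) ≤ 1),
            MeasureTheory.integral_Ioc_eq_integral_Ioo]
      _ = 1 := by rw [hsplit, hneg, h01]; norm_num
end
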